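/- For integers 0 ≤ k ≤ n with n ≥ 1 and k ∉ {0, n}, the binomial coefficient satisfies C(n,k) ≥ 2^{n·H(k/n)} / √(8k(1 − k/n)), where H is the binary entropy function H(p) = −p log₂ p − (1−p) log₂ (1−p). -/

import Mathlib

open Real

lemma sqrt_pi_le_stirling (n : ℕ) : Real.sqrt π ≤ Stirling.stirlingSeq (n+1) := by
  have h := Stirling.stirlingSeq'_antitone
  have ht : Filter.Tendsto (Stirling.stirlingSeq ∘ Nat.succ) Filter.atTop (nhds (Real.sqrt π)) :=
    Stirling.tendsto_stirlingSeq_sqrt_pi.comp (Filter.tendsto_add_atTop_nat 1)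
  exact h.le_of_tendsto ht n

lemma fac_low (n : ℕ) (hn : 0 < n) :
    Real.sqrt π * (Real.sqrt (2*n) * ((n:ℝ)/Real.exp 1)^n) ≤ (n.factorial : ℝ) := by
  obtain ⟨m, rfl⟩ := Nat.exists_eq_add_of_lt hn
  simp only [zero_add] at *
  have h := sqrt_pi_le_stirling m
  rw [Stirling.stirlingSeq] at h
  have hpos : 0 < Real.sqrt (2*((m+1:ℕ):ℝ)) * (((m+1:ℕ):ℝ)/Real.exp 1)^(m+1) := by positivity
  exact (le_div_iff₀ hpos).mp h

lemma stirling_two : Stirling.stirlingSeq 2 = Real.exp 1 ^ 2 / 4 := by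
  rw [Stirling.stirlingSeq]
  have : Real.sqrt (2 * (2:ℕ)) = 2 := by
    rw [show (2 * (2:ℕ) : ℝ) = 4 by norm_num]
    rw [show (4:ℝ) = 2^2 by norm_num, Real.sqrt_sq (by norm_num)]
  rw [this]
  have he : Real.exp 1 ≠ 0 := (Real.exp_pos 1).ne'
  field_simp
  norm_num [Nat.factorial]

lemma fac_high (k : ℕ) (hk : 2 ≤ k) :
    (k.factorial : ℝ) ≤ (Real.exp 1 ^ 2 / 4) * (Real.sqrt (2*k) * ((k:ℝ)/Real.exp 1)^k) := by
  obtain ⟨m, rfl⟩ := Nat.exists_eq_add_of_le hk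
  have h : Stirling.stirlingSeq (2 + m) ≤ Stirling.stirlingSeq 2 := by
    have := Stirling.stirlingSeq'_antitone (show 1 ≤ 1 + m by omega)
    have e1 : 1 + m + 1 = 2 + m := by omega
    simpa [Function.comp, Nat.succ_eq_add_one, e1] using this
  rw [stirling_two] at h
  rw [Stirling.stirlingSeq] at h
  have hpos : 0 < Real.sqrt (2*((2+m:ℕ):ℝ)) * (((2+m:ℕ):ℝ)/Real.exp 1)^(2+m) := by positivity
  exact (div_le_iff₀ hpos).mp h
lemma pow_aux (m : ℕ) (hm : 0 < m) : ((m:ℝ)+1)^(2*m+1) ≤ 8 * (m:ℝ)^(2*m+1) := by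
  rcases le_or_gt m 12 with h | h
  · interval_cases m <;> norm_num
  · have hm0 : (0:ℝ) < m := by positivity
    have hq : (0:ℝ) < 1 + 1/m := by positivity
    have h1 : (1 + 1/(m:ℝ))^m ≤ Real.exp 1 := by
      calc (1 + 1/(m:ℝ))^m ≤ (Real.exp (1/m))^m := by
            apply pow_le_pow_left₀ hq.le
            have := Real.add_one_le_exp (1/(m:ℝ)); linarith
        _ = Real.exp 1 := by
            rw [← Real.exp_nat_mul]; congr 1; field_simp
    have h2 : (1 + 1/(m:ℝ)) ≤ 14/13 := by
      have h13 : (13:ℝ) ≤ m := by exact_mod_cast h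
      have : 1/(m:ℝ) ≤ 1/13 := by
        apply div_le_div_of_nonneg_left (by norm_num) (by norm_num) h13
      linarith
    have he : Real.exp 1 < 2.7182818286 := Real.exp_one_lt_d9
    have key : (1 + 1/(m:ℝ))^(2*m+1) ≤ 8 := by
      have e1 : (1 + 1/(m:ℝ))^(2*m+1) = (1+1/m) * ((1+1/m)^m)^2 := by ring
      rw [e1]
      have hp : ((1+1/(m:ℝ))^m)^2 ≤ (Real.exp 1)^2 :=
        pow_le_pow_left₀ (by positivity) h1 2
      nlinarith [Real.exp_pos 1, pow_pos hq m]
    calc ((m:ℝ)+1)^(2*m+1) = (1+1/m)^(2*m+1) * (m:ℝ)^(2*m+1) := by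
          rw [← mul_pow]; congr 1; field_simp
      _ ≤ 8 * (m:ℝ)^(2*m+1) := by
          apply mul_le_mul_of_nonneg_right key (by positivity)

lemma edge (m : ℕ) (hm : 0 < m) :
    ((m:ℝ)+1)^(m+1) / (m:ℝ)^m / Real.sqrt (8*m/((m:ℝ)+1)) ≤ (m:ℝ)+1 := by
  have hm0 : (0:ℝ) < m := by positivity
  set N : ℝ := (m:ℝ)+1 with hNdef
  have hN : 0 < N := by positivity
  have hspos : 0 < Real.sqrt (8*m/N) := Real.sqrt_pos.mpr (by positivity)
  rw [div_le_iff₀ hspos, ← div_le_iff₀' hN, div_div]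
  apply (Real.le_sqrt (by positivity) (by positivity)).mpr
  rw [div_pow, div_le_div_iff₀ (by positivity) hN]
  have e1 : (N^(m+1))^2 * N = N^(2*m+1) * N^2 := by ring
  have e2 : 8*(m:ℝ) * ((m:ℝ)^m * N)^2 = (8*(m:ℝ)^(2*m+1)) * N^2 := by ring
  rw [e1, e2]
  exact mul_le_mul_of_nonneg_right (pow_aux m hm) (sq_nonneg N)
lemma numeric8 : Real.exp 1 ^ 8 ≤ 1024 * π := by
  have he : Real.exp 1 < 2.7182818286 := Real.exp_one_lt_d9
  have h1 : Real.exp 1 ^ 8 ≤ (2.7182818286:ℝ)^8 :=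
    pow_le_pow_left₀ (Real.exp_pos 1).le he.le 8
  have h2 : (2.7182818286:ℝ)^8 ≤ 1024 * π := by
    nlinarith [Real.pi_gt_d6]
  linarith

lemma step0 (p q : ℕ) (a b E : ℝ) (ha : 0 < a) (hb : 0 < b) (hE : 0 < E)
    (h8 : E ^ 8 ≤ 1024 * π) :
    (a+b)^(p+q) / (a^p * b^q) / Real.sqrt (8*a*b/(a+b)) ≤
    Real.sqrt π * (Real.sqrt (2*(a+b)) * ((a+b)/E)^(p+q)) /
      ((E^2/4 * (Real.sqrt (2*a) * (a/E)^p)) * (E^2/4 * (Real.sqrt (2*b) * (b/E)^q))) := by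
  have hN : 0 < a + b := by linarith
  have hL : (0:ℝ) ≤ (a+b)^(p+q) / (a^p * b^q) / Real.sqrt (8*a*b/(a+b)) := by positivity
  have hR : (0:ℝ) ≤ Real.sqrt π * (Real.sqrt (2*(a+b)) * ((a+b)/E)^(p+q)) /
      ((E^2/4 * (Real.sqrt (2*a) * (a/E)^p)) * (E^2/4 * (Real.sqrt (2*b) * (b/E)^q))) := by
    positivity
  rw [← pow_le_pow_iff_left₀ hL hR (two_ne_zero)]
  simp only [div_pow, mul_pow]
  rw [Real.sq_sqrt (by positivity : (0:ℝ) ≤ 8*a*b/(a+b)),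
    Real.sq_sqrt (by positivity : (0:ℝ) ≤ π),
    Real.sq_sqrt (by positivity : (0:ℝ) ≤ 2*(a+b)),
    Real.sq_sqrt (by positivity : (0:ℝ) ≤ 2*a),
    Real.sq_sqrt (by positivity : (0:ℝ) ≤ 2*b)]
  rw [div_le_div_iff₀ (by positivity) (by positivity)]
  have epow : E ^ (p+q) = E ^ p * E ^ q := pow_add _ _ _
  have hM : (0:ℝ) ≤ ((a+b)^(p+q))^2*a*b/((E^p)^2*(E^q)^2) := by positivity
  trans ((E^8/64) * (((a+b)^(p+q))^2*a*b/((E^p)^2*(E^q)^2)))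
  · apply le_of_eq; field_simp; ring
  trans ((16*π) * (((a+b)^(p+q))^2*a*b/((E^p)^2*(E^q)^2)))
  · exact mul_le_mul_of_nonneg_right (by linarith) hM
  · apply le_of_eq; rw [epow]; field_simp; ring
lemma key (k m : ℕ) (hk : 0 < k) (hm : 0 < m) :
    ((k:ℝ)+(m:ℝ))^(k+m) / ((k:ℝ)^k * (m:ℝ)^m) / Real.sqrt (8*(k:ℝ)*(m:ℝ)/((k:ℝ)+(m:ℝ)))
      ≤ ((k+m).choose k : ℝ) := by
  rcases eq_or_lt_of_le (Nat.one_le_iff_ne_zero.mpr hk.ne') with hk1 | hk2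
  · -- k = 1
    obtain rfl : k = 1 := hk1.symm
    have h := edge m hm
    rw [Nat.choose_one_right]
    push_cast
    calc ((1:ℝ)+m)^(1+m) / ((1:ℝ)^1 * (m:ℝ)^m) / Real.sqrt (8*1*(m:ℝ)/(1+(m:ℝ)))
        = ((m:ℝ)+1)^(m+1) / (m:ℝ)^m / Real.sqrt (8*m/((m:ℝ)+1)) := by
          rw [add_comm (1:ℝ) (m:ℝ), Nat.add_comm 1 m]; norm_num
      _ ≤ (m:ℝ)+1 := h
      _ = 1 + (m:ℝ) := by ring
  rcases eq_or_lt_of_le (Nat.one_le_iff_ne_zero.mpr hm.ne') with hm1 | hm2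
  · -- m = 1
    obtain rfl : m = 1 := hm1.symm
    have h := edge k hk
    rw [Nat.choose_succ_self_right]
    push_cast
    calc ((k:ℝ)+1)^(k+1) / ((k:ℝ)^k * (1:ℝ)^1) / Real.sqrt (8*(k:ℝ)*1/((k:ℝ)+1))
        = ((k:ℝ)+1)^(k+1) / (k:ℝ)^k / Real.sqrt (8*k/((k:ℝ)+1)) := by norm_num
      _ ≤ (k:ℝ)+1 := h
  · -- 2 ≤ k, 2 ≤ m
    have ha : (0:ℝ) < k := by exact_mod_cast hk
    have hb : (0:ℝ) < m := by exact_mod_cast hm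
    have hc : ((k+m).choose k : ℝ)
        = ((k+m).factorial : ℝ)/((k.factorial:ℝ)*(m.factorial:ℝ)) := by
      rw [Nat.cast_choose ℝ (Nat.le_add_right k m), Nat.add_sub_cancel_left]
    rw [hc]
    have hlow := fac_low (k+m) (by omega)
    push_cast at hlow
    have hhk := fac_high k hk2
    have hhm := fac_high m hm2
    calc ((k:ℝ)+(m:ℝ))^(k+m) / ((k:ℝ)^k * (m:ℝ)^m) / Real.sqrt (8*(k:ℝ)*(m:ℝ)/((k:ℝ)+(m:ℝ)))
        ≤ Real.sqrt π * (Real.sqrt (2*((k:ℝ)+(m:ℝ))) * (((k:ℝ)+(m:ℝ))/Real.exp 1)^(k+m)) /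
            ((Real.exp 1^2/4 * (Real.sqrt (2*(k:ℝ)) * ((k:ℝ)/Real.exp 1)^k)) *
              (Real.exp 1^2/4 * (Real.sqrt (2*(m:ℝ)) * ((m:ℝ)/Real.exp 1)^m))) :=
          step0 k m (k:ℝ) (m:ℝ) (Real.exp 1) ha hb (Real.exp_pos 1) numeric8
      _ ≤ ((k+m).factorial : ℝ)/((k.factorial:ℝ)*(m.factorial:ℝ)) := by
          apply div_le_div₀ (by positivity) hlow (by positivity)
          exact mul_le_mul hhk hhm (by positivity) (by positivity)
/-- Entropy lower bound on binomial coefficients: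
`C(n,k) ≥ 2^{n·H(k/n)} / √(8k(1-k/n))` for `0 < k < n`. -/
theorem stmt12 (n k : ℕ) (h0 : 0 < k) (h1 : k < n) :
    (2 : ℝ) ^ ((n : ℝ) * (-((k : ℝ) / n) * Real.logb 2 ((k : ℝ) / n)
        - (1 - (k : ℝ) / n) * Real.logb 2 (1 - (k : ℝ) / n)))
      / Real.sqrt (8 * k * (1 - (k : ℝ) / n))
    ≤ (n.choose k : ℝ) := by
  obtain ⟨m, hm0, rfl⟩ : ∃ m, 0 < m ∧ n = k + m := ⟨n - k, by omega, by omega⟩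
  have hk' : (0:ℝ) < k := by exact_mod_cast h0
  have hm' : (0:ℝ) < m := by exact_mod_cast hm0
  have hN : (0:ℝ) < (k:ℝ) + m := by linarith
  have hcast : ((k+m:ℕ):ℝ) = (k:ℝ)+m := by push_cast; ring
  have hfrac : 1 - (k:ℝ)/((k+m:ℕ):ℝ) = (m:ℝ)/((k:ℝ)+m) := by
    rw [hcast]; field_simp; ring
  have hlog2 : Real.log 2 ≠ 0 := (Real.log_pos (by norm_num)).ne'
  have hX : Real.log 2 * (((k+m:ℕ):ℝ) * (-((k:ℝ)/((k+m:ℕ):ℝ)) * Real.logb 2 ((k:ℝ)/((k+m:ℕ):ℝ))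
        - (1 - (k:ℝ)/((k+m:ℕ):ℝ)) * Real.logb 2 (1 - (k:ℝ)/((k+m:ℕ):ℝ))))
      = ((k+m:ℕ):ℝ) * Real.log ((k:ℝ)+m) - (k:ℝ)*Real.log k - (m:ℝ)*Real.log m := by
    rw [hfrac, hcast, Real.logb, Real.logb,
      Real.log_div hk'.ne' hN.ne', Real.log_div hm'.ne' hN.ne']
    field_simp
    ring
  have hexp : (2:ℝ) ^ (((k+m:ℕ):ℝ) * (-((k:ℝ)/((k+m:ℕ):ℝ)) * Real.logb 2 ((k:ℝ)/((k+m:ℕ):ℝ))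
        - (1 - (k:ℝ)/((k+m:ℕ):ℝ)) * Real.logb 2 (1 - (k:ℝ)/((k+m:ℕ):ℝ))))
      = ((k:ℝ)+(m:ℝ))^(k+m) / ((k:ℝ)^k * (m:ℝ)^m) := by
    rw [Real.rpow_def_of_pos (by norm_num : (0:ℝ) < 2), hX, Real.exp_sub, Real.exp_sub,
      Real.exp_nat_mul, Real.exp_nat_mul, Real.exp_nat_mul,
      Real.exp_log hN, Real.exp_log hk', Real.exp_log hm', div_div]
  have hsq : 8 * (k:ℝ) * (1 - (k:ℝ)/((k+m:ℕ):ℝ)) = 8*(k:ℝ)*(m:ℝ)/((k:ℝ)+(m:ℝ)) := by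
    rw [hfrac]; ring
  rw [hexp, hsq]
  exact key k m h0 hm0
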